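/- (Quantum duality theorem, partial correctness) Let 𝓔 be a quantum operation with dual 𝓔*, and M, N quantum predicates. Define WLP(𝓔, N) = I − 𝓔*(I − N). Then the partial correctness condition tr(Mρ) ≤ tr(N·𝓔(ρ)) + (tr(ρ) − tr(𝓔(ρ))) for all partial density operators ρ holds if and only if M ⊑ WLP(𝓔, N). -/

import Mathlib

open Matrix BigOperators ComplexOrder

private lemma psd_trace_re_nonneg {n : ℕ} {P : Matrix (Fin n) (Fin n) ℂ} (hP : P.PosSemidef) :
    0 ≤ (P.trace).re := by
  have h : 0 ≤ P.trace := by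
    rw [Matrix.trace]
    refine Finset.sum_nonneg fun i _ => ?_
    exact hP.diag_nonneg
  exact (Complex.le_def.mp h).1

open scoped MatrixOrder in
private lemma trace_mul_psd_nonneg {n : ℕ} {A B : Matrix (Fin n) (Fin n) ℂ}
    (hA : A.PosSemidef) (hB : B.PosSemidef) : 0 ≤ ((A * B).trace).re := by
  have hA0 : 0 ≤ A := hA.nonneg
  have h2 : (A * B).trace = (CFC.sqrt A * B * CFC.sqrt A).trace := by
    conv_lhs => rw [← CFC.sqrt_mul_sqrt_self A hA0]
    rw [mul_assoc, Matrix.trace_mul_comm, mul_assoc]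
  have h3 : (CFC.sqrt A * B * CFC.sqrt A).PosSemidef := by
    have := hB.mul_mul_conjTranspose_same (CFC.sqrt A)
    rwa [(CFC.sqrt_nonneg A).posSemidef.1.eq] at this
  exact h2 ▸ psd_trace_re_nonneg h3

private lemma trace_vecMulVec_eq {n : ℕ} (A : Matrix (Fin n) (Fin n) ℂ) (y : Fin n → ℂ) :
    (A * Matrix.vecMulVec y (star y)).trace = star y ⬝ᵥ A *ᵥ y := by
  simp only [Matrix.trace, Matrix.diag, Matrix.mul_apply, Matrix.vecMulVec_apply,
    dotProduct, Matrix.mulVec, Pi.star_apply, Finset.mul_sum]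
  exact Finset.sum_congr rfl fun i _ => Finset.sum_congr rfl fun j _ => by ring

private lemma psd_vecMulVec {n : ℕ} (y : Fin n → ℂ) :
    (Matrix.vecMulVec y (star y)).PosSemidef := by
  have h : Matrix.vecMulVec y (star y) = Matrix.replicateCol (Fin 1) y * (Matrix.replicateCol (Fin 1) y)ᴴ := by
    rw [Matrix.conjTranspose_replicateCol, Matrix.vecMulVec_eq (Fin 1)]
    rfl
  exact h ▸ Matrix.posSemidef_self_mul_conjTranspose _

/-- Quantum duality theorem (partial correctness): with
`WLP(𝓔, N) = I − 𝓔*(I − N)`, the partial correctness condition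
`tr(Mρ) ≤ tr(N·𝓔(ρ)) + (tr(ρ) − tr(𝓔(ρ)))` for all partial density
operators `ρ` holds iff `M ⊑ WLP(𝓔, N)`. -/
theorem quantum_duality_partial (n : ℕ) (ι : Type*) [Fintype ι]
    (E : ι → Matrix (Fin n) (Fin n) ℂ)
    (hE : ((1 : Matrix (Fin n) (Fin n) ℂ) - ∑ k, (E k)ᴴ * E k).PosSemidef)
    (M N : Matrix (Fin n) (Fin n) ℂ)
    (hMh : M.IsHermitian) (hM0 : M.PosSemidef)
    (hM1 : ((1 : Matrix (Fin n) (Fin n) ℂ) - M).PosSemidef)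
    (hNh : N.IsHermitian) (hN0 : N.PosSemidef)
    (hN1 : ((1 : Matrix (Fin n) (Fin n) ℂ) - N).PosSemidef) :
    (∀ ρ : Matrix (Fin n) (Fin n) ℂ, ρ.PosSemidef → (ρ.trace).re ≤ 1 →
        ((M * ρ).trace).re ≤ ((N * ∑ k, E k * ρ * (E k)ᴴ).trace).re
          + ((ρ.trace).re - ((∑ k, E k * ρ * (E k)ᴴ).trace).re))
      ↔ (((1 : Matrix (Fin n) (Fin n) ℂ)
            - ∑ k, (E k)ᴴ * ((1 : Matrix (Fin n) (Fin n) ℂ) - N) * E k) - M).PosSemidef := by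
  set A' : Matrix (Fin n) (Fin n) ℂ :=
    ((1 : Matrix (Fin n) (Fin n) ℂ)
      - ∑ k, (E k)ᴴ * ((1 : Matrix (Fin n) (Fin n) ℂ) - N) * E k) - M with hA'
  -- key trace identity
  have hkey : ∀ ρ : Matrix (Fin n) (Fin n) ℂ, (A' * ρ).trace
      = ρ.trace - (∑ k, E k * ρ * (E k)ᴴ).trace
        + (N * ∑ k, E k * ρ * (E k)ᴴ).trace - (M * ρ).trace := by
    intro ρ
    have hcyc : ∀ k : ι, (((E k)ᴴ * ((1 : Matrix (Fin n) (Fin n) ℂ) - N) * E k) * ρ).trace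
        = (E k * ρ * (E k)ᴴ).trace - (N * (E k * ρ * (E k)ᴴ)).trace := by
      intro k
      calc (((E k)ᴴ * ((1 : Matrix (Fin n) (Fin n) ℂ) - N) * E k) * ρ).trace
          = ((E k)ᴴ * (((1 : Matrix (Fin n) (Fin n) ℂ) - N) * (E k * ρ))).trace := by
            rw [mul_assoc, mul_assoc]
        _ = ((((1 : Matrix (Fin n) (Fin n) ℂ) - N) * (E k * ρ)) * (E k)ᴴ).trace :=
            Matrix.trace_mul_comm _ _
        _ = (((1 : Matrix (Fin n) (Fin n) ℂ) - N) * (E k * ρ * (E k)ᴴ)).trace := by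
            rw [mul_assoc, mul_assoc]
        _ = (E k * ρ * (E k)ᴴ).trace - (N * (E k * ρ * (E k)ᴴ)).trace := by
            rw [sub_mul, one_mul, Matrix.trace_sub]
    have hexp : A' * ρ
        = ρ - (∑ k, ((E k)ᴴ * ((1 : Matrix (Fin n) (Fin n) ℂ) - N) * E k) * ρ) - M * ρ := by
      rw [hA', sub_mul, sub_mul, one_mul, Finset.sum_mul]
    rw [hexp, Matrix.trace_sub, Matrix.trace_sub, Matrix.trace_sum]
    simp_rw [hcyc]
    rw [Finset.sum_sub_distrib, ← Matrix.trace_sum, ← Matrix.trace_sum, ← Finset.mul_sum]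
    ring
  -- A' is Hermitian
  have hA'h : A'.IsHermitian := by
    have hsum : (∑ k, (E k)ᴴ * ((1 : Matrix (Fin n) (Fin n) ℂ) - N) * E k).IsHermitian := by
      unfold Matrix.IsHermitian
      rw [Matrix.conjTranspose_sum]
      exact Finset.sum_congr rfl fun k _ =>
        (Matrix.isHermitian_conjTranspose_mul_mul (E k) hN1.1)
    exact (Matrix.isHermitian_one.sub hsum).sub hMh
  constructor
  · -- forward direction
    intro h
    refine Matrix.PosSemidef.of_dotProduct_mulVec_nonneg hA'h fun x => ?_
    by_cases hx : x = 0
    · simp [hx]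
    · set t : ℝ := ∑ i, Complex.normSq (x i) with ht
      have htpos : 0 < t := by
        obtain ⟨i, hi⟩ := Function.ne_iff.mp hx
        exact Finset.sum_pos' (fun j _ => Complex.normSq_nonneg _)
          ⟨i, Finset.mem_univ i, Complex.normSq_pos.mpr hi⟩
      set r : ℝ := (Real.sqrt t)⁻¹ with hr
      have hrpos : 0 < r := by positivity
      have hrr : r * r * t = 1 := by
        rw [hr, ← mul_inv, Real.mul_self_sqrt htpos.le]
        exact inv_mul_cancel₀ htpos.ne'
      set y : Fin n → ℂ := (r : ℂ) • x with hy
      set ρ : Matrix (Fin n) (Fin n) ℂ := Matrix.vecMulVec y (star y) with hρ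
      have hρpsd : ρ.PosSemidef := psd_vecMulVec y
      have htr : (ρ.trace).re = 1 := by
        have : ρ.trace = ∑ i, y i * star (y i) := by
          simp [hρ, Matrix.trace, Matrix.diag, Matrix.vecMulVec_apply]
        rw [this, Complex.re_sum]
        have : ∀ i, (y i * star (y i)).re = r * r * Complex.normSq (x i) := by
          intro i
          have : y i * star (y i) = ((Complex.normSq (y i) : ℝ) : ℂ) := by
            rw [mul_comm]; exact Complex.normSq_eq_conj_mul_self.symm
          rw [this, Complex.ofReal_re, hy]
          simp [Complex.normSq_mul, Complex.normSq_ofReal]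
        rw [Finset.sum_congr rfl fun i _ => this i, ← Finset.mul_sum, ← ht, hrr]
      have h1 := h ρ hρpsd htr.le
      have h2 := hkey ρ
      have h3 : 0 ≤ ((A' * ρ).trace).re := by
        have := congrArg Complex.re h2
        rw [Complex.sub_re, Complex.add_re, Complex.sub_re] at this
        linarith [this]
      -- translate back to the quadratic form at x
      have hdot : (A' * ρ).trace = (r : ℂ) * ((r : ℂ) * (star x ⬝ᵥ A' *ᵥ x)) := by
        rw [hρ, trace_vecMulVec_eq, hy]
        have hstar : star ((r : ℂ) • x) = (r : ℂ) • star x := by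
          ext i; simp [Complex.conj_ofReal]
        rw [hstar, Matrix.mulVec_smul, smul_dotProduct, dotProduct_smul]
        simp [smul_eq_mul]
      set q : ℂ := star x ⬝ᵥ A' *ᵥ x with hq
      have hqre : 0 ≤ q.re := by
        rw [hdot] at h3
        have : ((r : ℂ) * ((r : ℂ) * q)).re = r * (r * q.re) := by
          simp [Complex.mul_re]
        rw [this] at h3
        nlinarith
      have hqim : q.im = 0 := by
        have hρx : (Matrix.vecMulVec x (star x)).PosSemidef := psd_vecMulVec x
        have hq2 : q = (A' * Matrix.vecMulVec x (star x)).trace :=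
          (trace_vecMulVec_eq A' x).symm
        have : star q = q := by
          rw [hq2, ← Matrix.trace_conjTranspose, Matrix.conjTranspose_mul,
            hρx.1.eq, hA'h.eq, Matrix.trace_mul_comm]
        have := congrArg Complex.im this
        simp only [Complex.star_def, Complex.conj_im] at this
        linarith
      exact Complex.le_def.mpr ⟨by simpa using hqre, by simp [hqim]⟩
  · -- backward direction
    intro hpsd ρ hρ htr
    have h0 : 0 ≤ ((A' * ρ).trace).re := trace_mul_psd_nonneg hpsd hρ
    have h2 := congrArg Complex.re (hkey ρ)
    rw [Complex.sub_re, Complex.add_re, Complex.sub_re] at h2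
    linarith
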